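/- arXiv:0709.1308 — 4 statements merged into one kernel-verified Lean document; each statement's English description precedes it below -/
import Mathlib

section
/- For circuits, validity in abstract resource semantics coincides with classical tautologicity: a circuit C is valid (has a validating arrangement) if and only if C evaluates to true under every classical truth assignment, i.e., every function from atoms to Bool, where a P-port gets the value of P and a ¬P-port gets its negation. -/
/-- A literal: an atom or a negated atom. -/
inductive CLit (A : Type) : Type
  | pos : A → CLit A
  | neg : A → CLit A

/-- A node label: a port labeled by a literal, a conjunctive gate, or a disjunctive gate. -/
inductive CLab (A : Type) : Type
  | port : CLit A → CLab A
  | gand : CLab A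
  | gor : CLab A

/-- A cirquent: a finite DAG with a root that is an ancestor of all other nodes;
ports (literal-labeled nodes) have no children. -/
structure Cirquent (A : Type) : Type 1 where
  Node : Type
  fintypeNode : Fintype Node
  children : Node → List Node
  label : Node → CLab A
  root : Node
  port_no_child : ∀ v l, label v = CLab.port l → children v = []
  acyclic : WellFounded (fun x y : Node => x ∈ children y)
  root_ancestor : ∀ v, v ≠ root → Relation.TransGen (fun x y : Node => x ∈ children y) v root

namespace Cirquent

variable {A : Type}

/-- Evaluation of each node under a truth assignment `f` to the nodes (only the values on
ports matter): a port takes its assigned value, a disjunctive gate is true iff some child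
is true, a conjunctive gate is true iff all children are true. -/
noncomputable def eval (C : Cirquent A) (f : C.Node → Bool) : C.Node → Bool :=
  C.acyclic.fix fun v ih =>
    match C.label v with
    | CLab.port _ => f v
    | CLab.gor => ((C.children v).attach.map fun c => ih c.1 c.2).any id
    | CLab.gand => ((C.children v).attach.map fun c => ih c.1 c.2).all id

/-- The truth value of the cirquent: the value of its root. -/
noncomputable def value (C : Cirquent A) (f : C.Node → Bool) : Bool := C.eval f C.root

def IsPort (C : Cirquent A) (v : C.Node) : Prop := ∃ l, C.label v = CLab.port l

/-- Two ports have opposite labels: `P` and `¬P` for the same atom `P`. -/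
def Opposite (C : Cirquent A) (a b : C.Node) : Prop :=
  ∃ p, (C.label a = CLab.port (CLit.pos p) ∧ C.label b = CLab.port (CLit.neg p)) ∨
       (C.label a = CLab.port (CLit.neg p) ∧ C.label b = CLab.port (CLit.pos p))

/-- An arrangement: a set of (unordered, here represented as ordered) pairs of ports with
opposite labels, pairwise disjoint (the monogamicity condition). -/
def IsArrangement (C : Cirquent A) (α : Set (C.Node × C.Node)) : Prop :=
  (∀ p ∈ α, C.Opposite p.1 p.2) ∧
  ∀ p ∈ α, ∀ q ∈ α, p = q ∨ p = (q.2, q.1) ∨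
    ({p.1, p.2} ∩ ({q.1, q.2} : Set C.Node) = ∅)

/-- `f` is consistent with `α`: it assigns opposite values to the members of each allocation. -/
def Consistent (C : Cirquent A) (f : C.Node → Bool) (α : Set (C.Node × C.Node)) : Prop :=
  ∀ p ∈ α, f p.1 ≠ f p.2

/-- `α` is validating: it is an arrangement and the cirquent is true under every
consistent assignment. -/
def Validating (C : Cirquent A) (α : Set (C.Node × C.Node)) : Prop :=
  C.IsArrangement α ∧ ∀ f, C.Consistent f α → C.value f = true

/-- A cirquent is valid iff it has a validating arrangement. -/
def Valid (C : Cirquent A) : Prop := ∃ α, C.Validating α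

/-- A circuit: a cirquent all of whose ports have pairwise distinct labels. -/
def IsCircuit (C : Cirquent A) : Prop :=
  ∀ a b, C.IsPort a → C.IsPort b → a ≠ b → C.label a ≠ C.label b

end Cirquent

/-- The port assignment induced by a classical truth assignment `g` on atoms:
a `P`-port gets the value of `P` and a `¬P`-port gets its negation. -/
def classicalAssign {A : Type} (C : Cirquent A) (g : A → Bool) : C.Node → Bool :=
  fun v => match C.label v with
    | CLab.port (CLit.pos p) => g p
    | CLab.port (CLit.neg p) => !(g p)
    | _ => false

lemma eval_unfold {A : Type} (C : Cirquent A) (f : C.Node → Bool) (v : C.Node) :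
    C.eval f v = match C.label v with
      | CLab.port _ => f v
      | CLab.gor => ((C.children v).attach.map fun c => C.eval f c.1).any id
      | CLab.gand => ((C.children v).attach.map fun c => C.eval f c.1).all id := by
  unfold Cirquent.eval
  rw [WellFounded.fix_eq]

lemma eval_congr {A : Type} (C : Cirquent A) (f f' : C.Node → Bool)
    (h : ∀ v, C.IsPort v → f v = f' v) : ∀ v, C.eval f v = C.eval f' v := by
  intro v
  induction v using C.acyclic.induction with
  | _ v ih =>
    rw [eval_unfold, eval_unfold]
    cases hl : C.label v with
    | port l => exact h v ⟨l, hl⟩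
    | gand => simp only; congr 1; apply List.map_congr_left; intro c _; exact ih c.1 c.2
    | gor => simp only; congr 1; apply List.map_congr_left; intro c _; exact ih c.1 c.2

/-- For circuits, validity in abstract resource semantics coincides with classical
tautologicity. -/
theorem stmt6 {A : Type} (C : Cirquent A) (hC : C.IsCircuit) :
    C.Valid ↔ ∀ g : A → Bool, C.value (classicalAssign C g) = true := by
  constructor
  · rintro ⟨α, ⟨hopp, _⟩, hval⟩ g
    apply hval
    intro p hp
    obtain ⟨a, hab | hab⟩ := hopp p hp
    · simp [classicalAssign, hab.1, hab.2]
    · simp [classicalAssign, hab.1, hab.2]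
  · intro htaut
    classical
    refine ⟨{q | ∃ p, C.label q.1 = CLab.port (CLit.pos p) ∧
        C.label q.2 = CLab.port (CLit.neg p)}, ⟨?_, ?_⟩, ?_⟩
    · rintro q ⟨p, h1, h2⟩; exact ⟨p, Or.inl ⟨h1, h2⟩⟩
    · rintro q ⟨p, h1, h2⟩ r ⟨p', h1', h2'⟩
      by_cases hq : q = r
      · exact Or.inl hq
      · right; right
        ext x
        simp only [Set.mem_inter_iff, Set.mem_insert_iff, Set.mem_singleton_iff,
          Set.mem_empty_iff_false, iff_false, not_and]
        rintro (rfl | rfl) (h | h)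
        · -- q.1 = r.1
          rw [h, h1'] at h1
          have hp : p' = p := by injection h1 with h1; injection h1
          subst hp
          have : q.2 = r.2 := by
            by_contra hne
            exact hC q.2 r.2 ⟨_, h2⟩ ⟨_, h2'⟩ hne (h2.trans h2'.symm)
          exact hq (Prod.ext h this)
        · rw [h, h2'] at h1; injection h1 with h1; cases h1
        · rw [h, h1'] at h2; injection h2 with h2; cases h2
        · rw [h, h2'] at h2
          have hp : p' = p := by injection h2 with h2; injection h2
          subst hp
          have : q.1 = r.1 := by
            by_contra hne
            exact hC q.1 r.1 ⟨_, h1⟩ ⟨_, h1'⟩ hne (h1.trans h1'.symm)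
          exact hq (Prod.ext this h)
    · intro f hcons
      set g : A → Bool := fun p =>
        if h : ∃ v, C.label v = CLab.port (CLit.pos p) then f h.choose
        else if h' : ∃ w, C.label w = CLab.port (CLit.neg p) then !(f h'.choose)
        else false with hg
      have key : ∀ v, C.IsPort v → classicalAssign C g v = f v := by
        intro v ⟨l, hl⟩
        cases l with
        | pos p =>
          have hex : ∃ v, C.label v = CLab.port (CLit.pos p) := ⟨v, hl⟩
          have hv : hex.choose = v := by
            by_contra hne
            exact hC _ _ ⟨_, hex.choose_spec⟩ ⟨_, hl⟩ hne (hex.choose_spec.trans hl.symm)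
          simp [classicalAssign, hl, hg, hex, hv]
        | neg p =>
          by_cases hex : ∃ u, C.label u = CLab.port (CLit.pos p)
          · have hmem : (hex.choose, v) ∈ {q : C.Node × C.Node | ∃ p,
                C.label q.1 = CLab.port (CLit.pos p) ∧ C.label q.2 = CLab.port (CLit.neg p)} :=
              ⟨p, hex.choose_spec, hl⟩
            have := hcons _ hmem
            simp only [ne_eq] at this
            simp [classicalAssign, hl, hg, hex]
            cases hfv : f v <;> cases hfc : f hex.choose <;> simp_all
          · have hex' : ∃ w, C.label w = CLab.port (CLit.neg p) := ⟨v, hl⟩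
            have hv : hex'.choose = v := by
              by_contra hne
              exact hC _ _ ⟨_, hex'.choose_spec⟩ ⟨_, hl⟩ hne (hex'.choose_spec.trans hl.symm)
            simp [classicalAssign, hl, hg, hex, hex', hv]
      have := eval_congr C (classicalAssign C g) f key C.root
      rw [Cirquent.value, ← this]
      exact htaut g
end

section
/- A cirquent A is valid if and only if A is an instance of some valid circuit B. (Left to right: from a validating arrangement α for A, rename atoms so that two ports share an atom only when they are allocated to each other in α, obtaining a circuit B of which A is an instance and for which α remains validating. Right to left: validity is preserved under taking instances.) -/
def CLit.rename {A B : Type} (σ : A → B) : CLit A → CLit B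
  | .pos p => .pos (σ p)
  | .neg p => .neg (σ p)

def CLab.rename {A B : Type} (σ : A → B) : CLab A → CLab B
  | .port l => .port (l.rename σ)
  | .gand => .gand
  | .gor => .gor

/-- The instance of a cirquent obtained by renaming atoms via `σ`, applied uniformly to
all port labels (preserving negation); the underlying DAG is unchanged. -/
def Cirquent.rename {A B : Type} (C : Cirquent A) (σ : A → B) : Cirquent B where
  Node := C.Node
  fintypeNode := C.fintypeNode
  children := C.children
  label := fun v => (C.label v).rename σ
  root := C.root
  port_no_child := by
    intro v l h
    cases hl : C.label v with
    | port l' => exact C.port_no_child v l' hl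
    | gand => (try simp only at h); rw [hl] at h; simp [CLab.rename] at h
    | gor => (try simp only at h); rw [hl] at h; simp [CLab.rename] at h
  acyclic := C.acyclic
  root_ancestor := C.root_ancestor

namespace Cirquent

theorem eval_eq {A : Type} (C : Cirquent A) (f : C.Node → Bool) (v : C.Node) :
    C.eval f v = match C.label v with
      | CLab.port _ => f v
      | CLab.gor => ((C.children v).attach.map fun c => C.eval f c.1).any id
      | CLab.gand => ((C.children v).attach.map fun c => C.eval f c.1).all id := by
  unfold eval
  exact WellFounded.fix_eq _ _ _

theorem eval_rename {A B : Type} (C : Cirquent A) (σ : A → B) (f : C.Node → Bool)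
    (v : C.Node) : (C.rename σ).eval f v = C.eval f v := by
  induction v using C.acyclic.induction with
  | _ v ih =>
    rw [eval_eq, eval_eq (C.rename σ) f v]
    cases h : C.label v with
    | port l =>
      have h' : (C.rename σ).label v = CLab.port (l.rename σ) := by
        show (C.label v).rename σ = _; rw [h]; rfl
      rw [h']
    | gand =>
      have h' : (C.rename σ).label v = CLab.gand := by
        show (C.label v).rename σ = _; rw [h]; rfl
      rw [h']
      show ((C.children v).attach.map fun c => (C.rename σ).eval f c.1).all id = _
      congr 1
      exact List.map_congr_left fun c _ => ih c.1 c.2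
    | gor =>
      have h' : (C.rename σ).label v = CLab.gor := by
        show (C.label v).rename σ = _; rw [h]; rfl
      rw [h']
      show ((C.children v).attach.map fun c => (C.rename σ).eval f c.1).any id = _
      congr 1
      exact List.map_congr_left fun c _ => ih c.1 c.2

end Cirquent
/-- Relabel each port's atom, possibly depending on the node. -/
def Cirquent.relabel {A B : Type} (C : Cirquent A) (g : C.Node → A → B) : Cirquent B where
  Node := C.Node
  fintypeNode := C.fintypeNode
  children := C.children
  label := fun v => match C.label v with
    | CLab.port (CLit.pos p) => CLab.port (CLit.pos (g v p))
    | CLab.port (CLit.neg p) => CLab.port (CLit.neg (g v p))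
    | CLab.gand => CLab.gand
    | CLab.gor => CLab.gor
  root := C.root
  port_no_child := by
    intro v l h
    cases hl : C.label v with
    | port l' =>
      exact C.port_no_child v l' hl
    | gand => rw [hl] at h; exact absurd h (by simp)
    | gor => rw [hl] at h; exact absurd h (by simp)
  acyclic := C.acyclic
  root_ancestor := C.root_ancestor

theorem Cirquent.relabel_rename {A B : Type} (C : Cirquent A) (g : C.Node → A → B)
    (σ : B → A) (hσ : ∀ v p, σ (g v p) = p) : (C.relabel g).rename σ = C := by
  have hlab : (fun v => ((C.relabel g).label v).rename σ) = C.label := by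
    funext v
    show (match C.label v with
      | CLab.port (CLit.pos p) => CLab.port (CLit.pos (g v p))
      | CLab.port (CLit.neg p) => CLab.port (CLit.neg (g v p))
      | CLab.gand => CLab.gand
      | CLab.gor => CLab.gor).rename σ = C.label v
    cases h : C.label v with
    | port l => cases l <;> simp [CLab.rename, CLit.rename, hσ v]
    | gand => rfl
    | gor => rfl
  rcases C with ⟨N, ft, ch, lab, rt, h1, h2, h3⟩
  simp only [Cirquent.rename, Cirquent.relabel] at hlab ⊢
  congr 1
theorem partner_unique {A : Type} {C : Cirquent A} {α : Set (C.Node × C.Node)}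
    (hα : C.IsArrangement α) {v u w : C.Node}
    (hu : (v, u) ∈ α ∨ (u, v) ∈ α) (hw : (v, w) ∈ α ∨ (w, v) ∈ α) : u = w := by
  rcases hu with hu | hu <;> rcases hw with hw | hw <;>
    rcases hα.2 _ hu _ hw with h | h | h <;>
    first
    | (rw [Prod.ext_iff] at h; simp_all)
    | exact absurd h (by
        apply Set.nonempty_iff_ne_empty.mp
        exact ⟨v, by simp, by simp⟩)
theorem relabel_label {A B : Type} (C : Cirquent A) (g : C.Node → A → B) (v : C.Node) :
    (C.relabel g).label v = match C.label v with
      | CLab.port (CLit.pos p) => CLab.port (CLit.pos (g v p))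
      | CLab.port (CLit.neg p) => CLab.port (CLit.neg (g v p))
      | CLab.gand => CLab.gand
      | CLab.gor => CLab.gor := rfl

theorem eval_relabel {A B : Type} (C : Cirquent A) (g : C.Node → A → B)
    (f : C.Node → Bool) (v : C.Node) : (C.relabel g).eval f v = C.eval f v := by
  induction v using C.acyclic.induction with
  | _ v ih =>
    rw [Cirquent.eval_eq, Cirquent.eval_eq (C.relabel g) f v, relabel_label C g v]
    cases h : C.label v with
    | port l =>
      cases l <;> rfl
    | gand =>
      show ((C.children v).attach.map fun c => (C.relabel g).eval f c.1).all id = _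
      congr 1
      exact List.map_congr_left fun c _ => ih c.1 c.2
    | gor =>
      show ((C.children v).attach.map fun c => (C.relabel g).eval f c.1).any id = _
      congr 1
      exact List.map_congr_left fun c _ => ih c.1 c.2

theorem valid_iff_instance_of_valid_circuit {A : Type} (C : Cirquent A) :
    C.Valid ↔ ∃ (B : Type) (D : Cirquent B) (σ : B → A),
      D.IsCircuit ∧ D.Valid ∧ D.rename σ = C := by
  constructor
  · rintro ⟨α, hα, hval⟩
    classical
    set S : C.Node → Set C.Node := fun v => {u | u = v ∨ (v, u) ∈ α ∨ (u, v) ∈ α} with hSdef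
    have hSmem : ∀ v, v ∈ S v := fun v => Or.inl rfl
    have hSpair : ∀ {a b}, (a, b) ∈ α → S a = S b := by
      intro a b hab
      ext u
      constructor
      · rintro (rfl | hu)
        · exact Or.inr (Or.inr hab)
        · exact Or.inl (partner_unique hα hu (Or.inl hab))
      · rintro (rfl | hu)
        · exact Or.inr (Or.inl hab)
        · exact Or.inl (partner_unique hα hu (Or.inr hab))
    have hSeq : ∀ {a b}, S a = S b → a = b ∨ (a, b) ∈ α ∨ (b, a) ∈ α := by
      intro a b h
      have hb : b ∈ S a := h ▸ hSmem b
      rcases hb with h' | h'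
      · exact Or.inl h'.symm
      · exact Or.inr h'
    refine ⟨Set C.Node × A, C.relabel (fun v p => (S v, p)), Prod.snd, ?_, ?_,
      C.relabel_rename _ _ (fun v p => rfl)⟩
    · -- circuit
      intro a b ha hb hab hlab
      obtain ⟨la, ha⟩ := ha
      obtain ⟨lb, hb⟩ := hb
      rw [relabel_label C _ a] at ha hlab
      rw [relabel_label C _ b] at hb hlab
      rcases hca : C.label a with ⟨pa | pa⟩ | - | - <;>
        rcases hcb : C.label b with ⟨pb | pb⟩ | - | - <;>
        rw [hca] at ha hlab <;> rw [hcb] at hb hlab <;>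
        simp only [CLab.port.injEq, CLit.pos.injEq, CLit.neg.injEq, Prod.mk.injEq,
          reduceCtorEq] at ha hb hlab
      · -- pos/pos
        rcases hSeq hlab.1 with h | h | h
        · exact hab h
        · rcases hα.1 _ h with ⟨r, ⟨h1, h2⟩ | ⟨h1, h2⟩⟩ <;> simp_all
        · rcases hα.1 _ h with ⟨r, ⟨h1, h2⟩ | ⟨h1, h2⟩⟩ <;> simp_all
      · -- neg/neg
        rcases hSeq hlab.1 with h | h | h
        · exact hab h
        · rcases hα.1 _ h with ⟨r, ⟨h1, h2⟩ | ⟨h1, h2⟩⟩ <;> simp_all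
        · rcases hα.1 _ h with ⟨r, ⟨h1, h2⟩ | ⟨h1, h2⟩⟩ <;> simp_all
    · -- valid
      refine ⟨α, ⟨?_, hα.2⟩, ?_⟩
      · rintro ⟨a, b⟩ hp
        rcases hα.1 _ hp with ⟨r, ⟨h1, h2⟩ | ⟨h1, h2⟩⟩
        · refine ⟨(S a, r), Or.inl ⟨?_, ?_⟩⟩
          · rw [relabel_label C (fun v p => (S v, p)) a, h1]
          · rw [relabel_label C (fun v p => (S v, p)) b, h2, hSpair hp]
        · refine ⟨(S a, r), Or.inr ⟨?_, ?_⟩⟩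
          · rw [relabel_label C (fun v p => (S v, p)) a, h1]
          · rw [relabel_label C (fun v p => (S v, p)) b, h2, hSpair hp]
      · intro f hf
        have := hval f hf
        exact (eval_relabel C _ f C.root).trans this
  · rintro ⟨B, D, σ, hcirc, ⟨α, hαD, hvalD⟩, hr⟩
    subst hr
    refine ⟨α, ⟨?_, hαD.2⟩, ?_⟩
    · rintro ⟨a, b⟩ hp
      rcases hαD.1 _ hp with ⟨r, ⟨h1, h2⟩ | ⟨h1, h2⟩⟩
      · exact ⟨σ r, Or.inl ⟨by show (D.label a).rename σ = _; rw [h1]; rfl,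
          by show (D.label b).rename σ = _; rw [h2]; rfl⟩⟩
      · exact ⟨σ r, Or.inr ⟨by show (D.label a).rename σ = _; rw [h1]; rfl,
          by show (D.label b).rename σ = _; rw [h2]; rfl⟩⟩
    · intro f hf
      exact (Cirquent.eval_rename D σ f D.root).trans (hvalD f hf)

/-- A cirquent is valid if and only if it is an instance of some valid circuit. -/
theorem stmt8 {A : Type} (C : Cirquent A) :
    C.Valid ↔ ∃ (B : Type) (D : Cirquent B) (σ : B → A),
      D.IsCircuit ∧ D.Valid ∧ D.rename σ = C := by
  exact valid_iff_instance_of_valid_circuit C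
end

section
/- The cirquent of Figure 5 — with six ports labeled ¬P (numbered 1–6) and six ports labeled P (numbered 7–12); ∧-gates over {1,2},{3,4},{5,6},{7,8},{9,10},{11,12}; an ∨-gate over the first three ∧-gates, an ∨-gate over the last three ∧-gates; and a root ∧-gate over the two ∨-gates — is not valid: no arrangement for it is validating. -/
/-- The cirquent of Figure 5: six ports labeled ¬P (indices 0–5) and six ports labeled P
(indices 6–11); ∧-gates over {1,2},{3,4},{5,6},{7,8},{9,10},{11,12}; an ∨-gate over the
first three ∧-gates and one over the last three; root ∧-gate over the two ∨-gates.
It is not valid: for every arrangement (a set of pairwise disjoint pairs each consisting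
of one ¬P-port and one P-port) there is a consistent assignment making the cirquent
false. -/
theorem stmt11 (α : Finset (Fin 12 × Fin 12))
    (hopp : ∀ p ∈ α, (p.1 : ℕ) < 6 ∧ 6 ≤ (p.2 : ℕ))
    (hdisj : ∀ p ∈ α, ∀ q ∈ α, p ≠ q → p.1 ≠ q.1 ∧ p.2 ≠ q.2) :
    ∃ f : Fin 12 → Bool,
      (∀ p ∈ α, f p.1 ≠ f p.2) ∧
      (((f 0 && f 1) || ((f 2 && f 3) || (f 4 && f 5))) &&
       ((f 6 && f 7) || ((f 8 && f 9) || (f 10 && f 11)))) = false := by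
  refine ⟨fun i => decide (6 ≤ (i : ℕ)), ?_, by decide⟩
  intro p hp
  obtain ⟨h1, h2⟩ := hopp p hp
  simp [Nat.not_le.mpr h1, h2]
end

section
/- The tree-like cirquent corresponding to the formula ¬P ∨ (¬Q ∧ P₁) ∨ (P₂ ∧ ¬R) ∨ (Q ∧ R), where P₁ and P₂ are two separate ports both labeled P (the right cirquent of Figure 2), is not valid: for every arrangement α there exists a truth assignment consistent with α under which the cirquent is false. -/
/-- The right cirquent of Figure 2, the tree-like cirquent of
¬P ∨ (¬Q ∧ P₁) ∨ (P₂ ∧ ¬R) ∨ (Q ∧ R) with seven ports (indices):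
0:¬P, 1:¬Q, 2:P₁, 3:P₂, 4:¬R, 5:Q, 6:R, where P₁ and P₂ are two separate P-ports.
It is not valid: the only possible allocations are {0,2},{0,3},{1,5},{4,6}, and by
monogamicity {0,2} and {0,3} cannot both occur; for every such arrangement there is a
consistent truth assignment making the cirquent false. -/
theorem stmt12 (α : Finset (Fin 7 × Fin 7))
    (hopp : ∀ p ∈ α, p = ((0 : Fin 7), (2 : Fin 7)) ∨ p = ((0 : Fin 7), (3 : Fin 7)) ∨
      p = ((1 : Fin 7), (5 : Fin 7)) ∨ p = ((4 : Fin 7), (6 : Fin 7)))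
    (hmono : ¬(((0 : Fin 7), (2 : Fin 7)) ∈ α ∧ ((0 : Fin 7), (3 : Fin 7)) ∈ α)) :
    ∃ f : Fin 7 → Bool,
      (∀ p ∈ α, f p.1 ≠ f p.2) ∧
      (f 0 || ((f 1 && f 2) || ((f 3 && f 4) || (f 5 && f 6)))) = false := by
  by_cases h : ((0 : Fin 7), (2 : Fin 7)) ∈ α
  · -- then (0,3) ∉ α
    have h3 : ((0 : Fin 7), (3 : Fin 7)) ∉ α := fun h3 => hmono ⟨h, h3⟩
    refine ⟨![false, false, true, false, true, true, false], ?_, by decide⟩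
    intro p hp
    rcases hopp p hp with rfl | rfl | rfl | rfl
    · decide
    · exact absurd hp h3
    · decide
    · decide
  · refine ⟨![false, true, false, true, false, false, true], ?_, by decide⟩
    intro p hp
    rcases hopp p hp with rfl | rfl | rfl | rfl
    · exact absurd hp h
    · decide
    · decide
    · decide
end
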